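/- Let X be a two-dimensional SFT of radius r over alphabet Σ. If X contains a configuration with periodicity vector (m,n) where m ≥ n > 0, then X contains a fully periodic configuration having both (m,n) and (0,p) as periodicity vectors, for some p with 0 < p ≤ |Σ|^(4rm). -/

import Mathlib

set_option maxHeartbeats 1000000


/-- The square window of radius `r` around the origin. -/
def Ball (r : ℤ) : Type :=
  {p : ℤ × ℤ // -r ≤ p.1 ∧ p.1 ≤ r ∧ -r ≤ p.2 ∧ p.2 ≤ r}

private lemma aux_perZ {A : Type*} (c : ℤ × ℤ → A) (M N : ℤ)
    (hper : ∀ a b : ℤ, c (a + M, b + N) = c (a, b)) :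
    ∀ (ℓ : ℤ) (a b : ℤ), c (a + ℓ * M, b + ℓ * N) = c (a, b) := by
  intro ℓ
  induction ℓ using Int.induction_on with
  | zero => intro a b; simp
  | succ k ih =>
      intro a b
      have e : ((a + ((k : ℤ) + 1) * M, b + ((k : ℤ) + 1) * N) : ℤ × ℤ)
          = ((a + (k : ℤ) * M) + M, (b + (k : ℤ) * N) + N) := by
        refine Prod.ext ?_ ?_ <;> simp <;> ring
      rw [e, hper, ih]
  | pred k ih =>
      intro a b
      have h2 := hper (a + (-(k : ℤ) - 1) * M) (b + (-(k : ℤ) - 1) * N)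
      have e : ((a + (-(k : ℤ) - 1) * M + M, b + (-(k : ℤ) - 1) * N + N) : ℤ × ℤ)
          = (a + (-(k : ℤ)) * M, b + (-(k : ℤ)) * N) := by
        refine Prod.ext ?_ ?_ <;> simp <;> ring
      rw [e] at h2
      rw [← h2]
      exact ih a b

private lemma aux_succ_mod (P : ℤ) (hP : 0 < P) (a : ℤ) :
    (a + 1) % P = a % P + 1 ∨ ((a + 1) % P = 0 ∧ a % P = P - 1) := by
  have h1 : (a + 1) % P = (a % P + 1) % P := (Int.emod_add_emod a P 1).symm
  have hx0 : 0 ≤ a % P := Int.emod_nonneg a hP.ne'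
  have hxP : a % P < P := Int.emod_lt_of_pos a hP
  rcases lt_or_eq_of_le (by omega : a % P + 1 ≤ P) with h | h
  · left
    rw [h1, Int.emod_eq_of_lt (by omega) h]
  · right
    constructor
    · rw [h1, h, Int.emod_self]
    · omega

/-- If a 2D SFT of radius `r` contains a configuration with periodicity vector
`(m,n)`, `m ≥ n > 0`, then it contains a fully periodic configuration with
periods `(m,n)` and `(0,p)` for some `0 < p ≤ |Σ|^(4rm)`. -/
theorem fully_periodic_with_bound {A : Type*} [Fintype A]
    (m n r : ℕ) (hr : 0 < r) (hn : 0 < n) (hnm : n ≤ m)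
    (F : Set (Ball (r : ℤ) → A)) (c : ℤ × ℤ → A)
    (hc : ∀ t : ℤ × ℤ, (fun z : Ball (r : ℤ) => c (t + z.1)) ∉ F)
    (hper : ∀ z, c (z + ((m : ℤ), (n : ℤ))) = c z) :
    ∃ c' : ℤ × ℤ → A,
      (∀ t : ℤ × ℤ, (fun z : Ball (r : ℤ) => c' (t + z.1)) ∉ F) ∧
      ∃ p : ℕ, 0 < p ∧ p ≤ Fintype.card A ^ (4 * r * m) ∧
        (∀ z, c' (z + ((m : ℤ), (n : ℤ))) = c' z) ∧
        (∀ z, c' (z + (0, (p : ℤ))) = c' z) := by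
  classical
  have hm : 0 < m := hn.trans_le hnm
  have hM : (0 : ℤ) < (m : ℤ) := by exact_mod_cast hm
  have hNle : (n : ℤ) ≤ (m : ℤ) := by exact_mod_cast hnm
  have hR : (0 : ℤ) ≤ (r : ℤ) := by positivity
  -- pointwise form of the periodicity hypothesis
  have hper' : ∀ a b : ℤ, c (a + (m : ℤ), b + (n : ℤ)) = c (a, b) := by
    intro a b
    simpa [Prod.mk_add_mk] using hper (a, b)
  have hperZ := aux_perZ c (m : ℤ) (n : ℤ) hper'
  -- the "perpendicular coordinate"
  set φ : ℤ × ℤ → ℤ := fun z => z.2 * (m : ℤ) - z.1 * (n : ℤ) with hφdef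
  set κ : ℤ × ℤ → ℤ := fun z => φ z / (m : ℤ) with hκdef
  -- ceiling of i*n/m
  set q : ℤ → ℤ := fun i => -((-(i * (n : ℤ))) / (m : ℤ)) with hqdef
  have hq1 : ∀ i : ℤ, i * (n : ℤ) ≤ q i * (m : ℤ) := by
    intro i
    have h := Int.ediv_mul_le (-(i * (n : ℤ))) hM.ne'
    simp only [hqdef]
    nlinarith [h]
  have hq2 : ∀ i : ℤ, q i * (m : ℤ) < i * (n : ℤ) + (m : ℤ) := by
    intro i
    have h := Int.lt_ediv_add_one_mul_self (-(i * (n : ℤ))) hM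
    simp only [hqdef]
    nlinarith [h]
  have hκ_shift : ∀ (a b t : ℤ), κ (a, b + t) = κ (a, b) + t := by
    intro a b t
    have e : φ (a, b + t) = φ (a, b) + t * (m : ℤ) := by simp only [hφdef]; ring
    simp only [hκdef, e]
    exact Int.add_mul_ediv_right _ _ hM.ne'
  -- pigeonhole on strip contents
  set Nc := Fintype.card A ^ (4 * r * m) with hNc
  set f : Fin (Nc + 1) → (Fin m × Fin (4 * r) → A) :=
    fun k ib => c (((ib.1 : ℕ) : ℤ), q ((ib.1 : ℕ) : ℤ) + ((ib.2 : ℕ) : ℤ) + ((k : ℕ) : ℤ))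
    with hfdef
  have hcard : Fintype.card (Fin m × Fin (4 * r) → A) < Fintype.card (Fin (Nc + 1)) := by
    rw [Fintype.card_fun, Fintype.card_prod, Fintype.card_fin, Fintype.card_fin,
      Fintype.card_fin, hNc]
    have e : m * (4 * r) = 4 * r * m := by ring
    rw [e]
    exact Nat.lt_succ_self _
  obtain ⟨k₁, k₂, hk12, hk2le, hff⟩ :
      ∃ k₁ k₂ : ℕ, k₁ < k₂ ∧ k₂ ≤ Nc ∧
        ∀ (i : Fin m) (b : Fin (4 * r)),
          c (((i : ℕ) : ℤ), q ((i : ℕ) : ℤ) + ((b : ℕ) : ℤ) + ((k₁ : ℕ) : ℤ))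
            = c (((i : ℕ) : ℤ), q ((i : ℕ) : ℤ) + ((b : ℕ) : ℤ) + ((k₂ : ℕ) : ℤ)) := by
    obtain ⟨a, b, hab, hfab⟩ := Fintype.exists_ne_map_eq_of_card_lt f hcard
    rcases hab.lt_or_gt with h | h
    · exact ⟨(a : ℕ), (b : ℕ), h, Nat.lt_succ_iff.mp b.isLt,
        fun i bb => congrFun hfab (i, bb)⟩
    · exact ⟨(b : ℕ), (a : ℕ), h, Nat.lt_succ_iff.mp a.isLt,
        fun i bb => congrFun hfab.symm (i, bb)⟩
  set P : ℤ := (k₂ : ℤ) - (k₁ : ℤ) with hPdef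
  have hP0 : 0 < P := by simp only [hPdef]; omega
  -- the key periodicity fact on the distinguished strip
  have star : ∀ w : ℤ × ℤ, (k₁ : ℤ) * (m : ℤ) ≤ φ w →
      φ w < ((k₁ : ℤ) + 4 * (r : ℤ)) * (m : ℤ) → c (w.1, w.2 + P) = c w := by
    intro w h1 h2
    set i : ℤ := w.1 % (m : ℤ) with hidef
    set ℓ : ℤ := w.1 / (m : ℤ) with hldef
    have hi0 : 0 ≤ i := Int.emod_nonneg _ hM.ne'
    have him : i < (m : ℤ) := Int.emod_lt_of_pos _ hM
    have hw1 : w.1 = i + ℓ * (m : ℤ) := by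
      have := Int.emod_add_mul_ediv w.1 (m : ℤ)
      simp only [hidef, hldef]
      linarith [this]
    set j : ℤ := w.2 - (k₁ : ℤ) - ℓ * (n : ℤ) with hjdef
    have e1 : c w = c (i, j + (k₁ : ℤ)) := by
      have h := hperZ ℓ i (j + (k₁ : ℤ))
      rw [← h]
      congr 1
      refine Prod.ext ?_ ?_
      · simp [hw1]
      · simp only [hjdef]; ring
    have e2 : c (w.1, w.2 + P) = c (i, j + (k₂ : ℤ)) := by
      have h := hperZ ℓ i (j + (k₂ : ℤ))
      rw [← h]
      congr 1
      refine Prod.ext ?_ ?_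
      · simp [hw1]
      · simp only [hjdef, hPdef]; ring
    have hφw : φ w = j * (m : ℤ) - i * (n : ℤ) + (k₁ : ℤ) * (m : ℤ) := by
      simp only [hφdef, hjdef]
      rw [hw1]
      ring
    set b : ℤ := j - q i with hbdef
    have hb0 : 0 ≤ b := by
      have h3 : (-1 : ℤ) * (m : ℤ) < b * (m : ℤ) := by
        have := hq2 i
        simp only [hbdef]
        nlinarith [hφw, h1]
      have := lt_of_mul_lt_mul_right h3 hM.le
      omega
    have hb4 : b < 4 * (r : ℤ) := by
      have h3 : b * (m : ℤ) < (4 * (r : ℤ)) * (m : ℤ) := by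
        have := hq1 i
        simp only [hbdef]
        nlinarith [hφw, h2]
      exact lt_of_mul_lt_mul_right h3 hM.le
    have hfin : c (i, q i + b + (k₁ : ℤ)) = c (i, q i + b + (k₂ : ℤ)) := by
      have hh := hff ⟨i.toNat, by omega⟩ ⟨b.toNat, by omega⟩
      simpa [Int.toNat_of_nonneg hi0, Int.toNat_of_nonneg hb0] using hh
    have hqb : q i + b = j := by simp only [hbdef]; ring
    rw [e1, e2, ← hqb]
    exact hfin.symm
  -- the shift function and the new configuration
  set s : ℤ → ℤ := fun K => (k₁ : ℤ) + (K - (k₁ : ℤ)) % P - K with hsdef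
  set c' : ℤ × ℤ → A := fun z => c (z.1, z.2 + s (κ z)) with hc'def
  -- key lemma: local uniformization of the shift
  have B : ∀ (jj : ℕ), jj ≤ 4 * r → ∀ (z : ℤ × ℤ) (K : ℤ), κ z = K + (jj : ℤ) →
      c' z = c (z.1, z.2 + s K) := by
    intro jj
    induction jj with
    | zero =>
        intro _ z K hK
        simp only [hc'def]
        rw [hK]
        norm_num
    | succ j ih =>
        intro hj z K hK
        have h1 : c' z = c (z.1, z.2 + s (K + 1)) := by
          refine ih (by omega) z (K + 1) ?_
          push_cast at hK ⊢
          linarith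
        rw [h1]
        rcases aux_succ_mod P hP0 (K - (k₁ : ℤ)) with hcase | ⟨hc0, hcm⟩
        · have e : s (K + 1) = s K := by
            simp only [hsdef]
            rw [show K + 1 - (k₁ : ℤ) = (K - (k₁ : ℤ)) + 1 by ring, hcase]
            ring
          rw [e]
        · have hsK1 : s (K + 1) = (k₁ : ℤ) - K - 1 := by
            simp only [hsdef]
            rw [show K + 1 - (k₁ : ℤ) = (K - (k₁ : ℤ)) + 1 by ring, hc0]
            ring
          have hsK : s K = (k₁ : ℤ) - K - 1 + P := by
            simp only [hsdef]
            rw [hcm]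
            ring
          rw [hsK1, hsK]
          -- apply star at the shifted point
          have hκw : κ (z.1, z.2 + ((k₁ : ℤ) - K - 1)) = (k₁ : ℤ) + (j : ℤ) := by
            rw [hκ_shift, show ((z.1, z.2) : ℤ × ℤ) = z from rfl, hK]
            push_cast
            ring
          have hb1 : (k₁ : ℤ) * (m : ℤ) ≤ φ (z.1, z.2 + ((k₁ : ℤ) - K - 1)) := by
            have : (k₁ : ℤ) ≤ κ (z.1, z.2 + ((k₁ : ℤ) - K - 1)) := by
              rw [hκw]; omega
            rw [hκdef] at this
            exact (Int.le_ediv_iff_mul_le hM).mp this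
          have hb2 : φ (z.1, z.2 + ((k₁ : ℤ) - K - 1)) <
              ((k₁ : ℤ) + 4 * (r : ℤ)) * (m : ℤ) := by
            have hjr : (j : ℤ) < 4 * (r : ℤ) := by exact_mod_cast (by omega : j < 4 * r)
            have : κ (z.1, z.2 + ((k₁ : ℤ) - K - 1)) < (k₁ : ℤ) + 4 * (r : ℤ) := by
              rw [hκw]; linarith
            rw [hκdef] at this
            exact (Int.ediv_lt_iff_lt_mul hM).mp this
          have hw := star (z.1, z.2 + ((k₁ : ℤ) - K - 1)) hb1 hb2
          simp only at hw
          rw [show z.2 + ((k₁ : ℤ) - K - 1 + P) = z.2 + ((k₁ : ℤ) - K - 1) + P by ring]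
          exact hw.symm
  refine ⟨c', ?_, k₂ - k₁, by omega, by omega, ?_, ?_⟩
  · -- admissibility
    intro t
    set K : ℤ := (φ t - ((r : ℤ) * (m : ℤ) + (r : ℤ) * (n : ℤ))) / (m : ℤ) with hKdef
    have hrange : ∀ u : ℤ × ℤ, -(r : ℤ) ≤ u.1 → u.1 ≤ (r : ℤ) → -(r : ℤ) ≤ u.2 →
        u.2 ≤ (r : ℤ) → K ≤ κ (t + u) ∧ κ (t + u) ≤ K + 4 * (r : ℤ) := by
      intro u h1 h2 h3 h4
      have hφu : φ (t + u) = φ t + (u.2 * (m : ℤ) - u.1 * (n : ℤ)) := by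
        simp only [hφdef, Prod.fst_add, Prod.snd_add]
        ring
      have hNge : (0 : ℤ) ≤ (n : ℤ) := by positivity
      have hm1 : (-(r : ℤ)) * (m : ℤ) ≤ u.2 * (m : ℤ) := mul_le_mul_of_nonneg_right h3 hM.le
      have hm2 : u.2 * (m : ℤ) ≤ (r : ℤ) * (m : ℤ) := mul_le_mul_of_nonneg_right h4 hM.le
      have hn1 : (-(r : ℤ)) * (n : ℤ) ≤ u.1 * (n : ℤ) := mul_le_mul_of_nonneg_right h1 hNge
      have hn2 : u.1 * (n : ℤ) ≤ (r : ℤ) * (n : ℤ) := mul_le_mul_of_nonneg_right h2 hNge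
      have hlow : φ t - ((r : ℤ) * (m : ℤ) + (r : ℤ) * (n : ℤ)) ≤ φ (t + u) := by
        rw [hφu]; linarith
      have hhigh : φ (t + u) ≤ φ t + ((r : ℤ) * (m : ℤ) + (r : ℤ) * (n : ℤ)) := by
        rw [hφu]; linarith
      constructor
      · simp only [hKdef, hκdef]
        exact Int.ediv_le_ediv hM hlow
      · have hrn : (r : ℤ) * (n : ℤ) ≤ (r : ℤ) * (m : ℤ) := mul_le_mul_of_nonneg_left hNle hR
        have step2 : φ (t + u) ≤
            (φ t - ((r : ℤ) * (m : ℤ) + (r : ℤ) * (n : ℤ))) + (4 * (r : ℤ)) * (m : ℤ) := by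
          linarith
        have step3 := Int.ediv_le_ediv hM step2
        rw [Int.add_mul_ediv_right _ _ hM.ne'] at step3
        simp only [hKdef, hκdef]
        exact step3
    have key : (fun z : Ball (r : ℤ) => c' (t + z.1))
        = (fun z : Ball (r : ℤ) => c ((t.1, t.2 + s K) + z.1)) := by
      funext z
      obtain ⟨hz1, hz2, hz3, hz4⟩ := z.2
      obtain ⟨hl, hh⟩ := hrange z.1 hz1 hz2 hz3 hz4
      have hB := B (κ (t + z.1) - K).toNat (by omega) (t + z.1) K (by omega)
      rw [hB]
      congr 1
      refine Prod.ext ?_ ?_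
      · simp [Prod.fst_add]
      · simp only [Prod.snd_add]
        ring
    rw [key]
    exact hc (t.1, t.2 + s K)
  · -- (m,n)-periodicity
    intro z
    have hκv : κ (z + ((m : ℤ), (n : ℤ))) = κ z := by
      have : φ (z + ((m : ℤ), (n : ℤ))) = φ z := by
        simp only [hφdef, Prod.fst_add, Prod.snd_add]
        ring
      simp only [hκdef, this]
    simp only [hc'def, hκv]
    have := hper' z.1 (z.2 + s (κ z))
    rw [← this]
    congr 1
    refine Prod.ext ?_ ?_
    · simp [Prod.fst_add]
    · simp only [Prod.snd_add]
      ring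
  · -- vertical periodicity
    intro z
    have hpP : ((k₂ - k₁ : ℕ) : ℤ) = P := by
      simp only [hPdef]
      omega
    have hsP : ∀ K : ℤ, s (K + P) = s K - P := by
      intro K
      simp only [hsdef]
      rw [show K + P - (k₁ : ℤ) = (K - (k₁ : ℤ)) + P * 1 by ring,
        Int.add_mul_emod_self_left]
      ring
    have hκp : κ (z + ((0 : ℤ), ((k₂ - k₁ : ℕ) : ℤ))) = κ z + P := by
      have e : (z + ((0 : ℤ), ((k₂ - k₁ : ℕ) : ℤ))) = (z.1, z.2 + P) := by
        refine Prod.ext ?_ ?_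
        · simp [Prod.fst_add]
        · simp [Prod.snd_add, hpP]
      rw [e, hκ_shift, show ((z.1, z.2) : ℤ × ℤ) = z from rfl]
    simp only [hc'def, hκp, hsP]
    congr 1
    refine Prod.ext ?_ ?_
    · simp [Prod.fst_add]
    · simp only [Prod.snd_add]
      push_cast [hpP]
      ring
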